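/- If a network G has only finitely many points g_1,…,g_k that are farthest points of some point of G, then the eccentricity function is not locally constant on any edge of G: on every edge uv, ecc is the upper envelope of the k functions p ↦ d(p,g_i), each of which strictly increases to its unique maximum on uv and strictly decreases afterwards, hence the envelope has no nondegenerate constant piece. -/

import Mathlib

open Set

/-- A finite simple undirected network on `n` vertices with positive edge weights. -/
structure WGraph (n : ℕ) where
  adj : Fin n → Fin n → Bool
  symm : ∀ u v, adj u v = adj v u
  loopless : ∀ u, adj u u = false
  w : Fin n → Fin n → ℝ
  wsymm : ∀ u v, w u v = w v u
  wpos : ∀ u v, adj u v = true → 0 < w u v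

variable {n : ℕ}

def WGraph.toSimple (G : WGraph n) : SimpleGraph (Fin n) where
  Adj u v := G.adj u v = true
  symm := ⟨fun u v (h : G.adj u v = true) => show G.adj v u = true by rw [G.symm]; exact h⟩
  loopless := ⟨fun u (h : G.adj u u = true) => by simp [G.loopless u] at h⟩

instance (G : WGraph n) : DecidableRel G.toSimple.Adj :=
  fun u v => inferInstanceAs (Decidable (G.adj u v = true))

/-- Total weight of a walk. -/
noncomputable def WGraph.walkWeight (G : WGraph n) {u v : Fin n}
    (p : G.toSimple.Walk u v) : ℝ :=
  (p.darts.map fun d => G.w d.toProd.1 d.toProd.2).sum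

/-- Weighted shortest-path distance between vertices. -/
noncomputable def WGraph.vdist (G : WGraph n) (u v : Fin n) : ℝ :=
  sInf {x | ∃ p : G.toSimple.Walk u v, x = G.walkWeight p}

/-- Network distance between the point at parameter `a` on edge `uv` and the point at
parameter `b` on edge `st`: the minimum over routes through the endpoints, together with
the direct route along the edge when the two edges coincide. -/
noncomputable def WGraph.pdist (G : WGraph n) (u v : Fin n) (a : ℝ) (s t : Fin n) (b : ℝ) : ℝ :=
  let base := min
    (min (a * G.w u v + G.vdist u s + b * G.w s t)
         (a * G.w u v + G.vdist u t + (1 - b) * G.w s t))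
    (min ((1 - a) * G.w u v + G.vdist v s + b * G.w s t)
         ((1 - a) * G.w u v + G.vdist v t + (1 - b) * G.w s t))
  if u = s ∧ v = t then min (|a - b| * G.w u v) base
  else if u = t ∧ v = s then min (|a - (1 - b)| * G.w u v) base
  else base

/-- Eccentricity of the point at parameter `a` on edge `uv`: the largest network distance
to any point of the network. -/
noncomputable def WGraph.eccOn (G : WGraph n) (u v : Fin n) (a : ℝ) : ℝ :=
  sSup {x | ∃ s t, G.adj s t = true ∧ ∃ b ∈ Icc (0:ℝ) 1, x = G.pdist u v a s t b}

/-- A point of the network: an (oriented) edge together with a parameter in `[0,1]`. -/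
abbrev NetPt (n : ℕ) := (Fin n × Fin n) × ℝ

def WGraph.validPt (G : WGraph n) (p : NetPt n) : Prop :=
  G.adj p.1.1 p.1.2 = true ∧ p.2 ∈ Icc (0:ℝ) 1

noncomputable def WGraph.pdistPt (G : WGraph n) (p q : NetPt n) : ℝ :=
  G.pdist p.1.1 p.1.2 p.2 q.1.1 q.1.2 q.2

noncomputable def WGraph.eccPt (G : WGraph n) (p : NetPt n) : ℝ :=
  G.eccOn p.1.1 p.1.2 p.2

/-- `f` is piecewise affine on `[0,1]` with at most `N` pieces. -/
def PWAffine (f : ℝ → ℝ) (N : ℕ) : Prop :=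
  ∃ t : Fin (N + 1) → ℝ, Monotone t ∧ t 0 = 0 ∧ t (Fin.last N) = 1 ∧
    ∀ i : Fin N, ∃ a b : ℝ, ∀ x ∈ Icc (t i.castSucc) (t i.succ), f x = a * x + b


private lemma keyP' (w c y1 y2 p1 p2 pm : ℝ) (hw : w ≠ 0) (hne : y1 ≠ y2)
    (h1 : c ≤ p1) (h2 : c ≤ p2) (hm : pm ≤ c)
    (e : p1 + p2 = 2 * pm)
    (slope : p2 - p1 = w * (y2 - y1) ∨ p2 - p1 = -(w * (y2 - y1))) : False := by
  have hp1 : p1 = c := by linarith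
  have hp2 : p2 = c := by linarith
  have h0 : w * (y2 - y1) = 0 := by rcases slope with h | h <;> linarith
  rcases mul_eq_zero.1 h0 with h | h
  · exact hw h
  · exact hne (by linarith)

private lemma pdist_cont (G : WGraph n) (u v s t : Fin n) (x : ℝ) :
    Continuous fun β => G.pdist u v x s t β := by
  rcases em (u = s ∧ v = t) with h1 | h1
  · simp only [WGraph.pdist, if_pos h1]; fun_prop
  · rcases em (u = t ∧ v = s) with h2 | h2
    · simp only [WGraph.pdist, if_neg h1, if_pos h2]; fun_prop
    · simp only [WGraph.pdist, if_neg h1, if_neg h2]; fun_prop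

private lemma eccSet_compact (G : WGraph n) (u v : Fin n) (x : ℝ) :
    IsCompact {r : ℝ | ∃ s t, G.adj s t = true ∧ ∃ β ∈ Icc (0:ℝ) 1, r = G.pdist u v x s t β} := by
  have hEq : {r : ℝ | ∃ s t, G.adj s t = true ∧ ∃ β ∈ Icc (0:ℝ) 1, r = G.pdist u v x s t β}
      = ⋃ p ∈ {p : Fin n × Fin n | G.adj p.1 p.2 = true},
          (fun β => G.pdist u v x p.1 p.2 β) '' Icc (0:ℝ) 1 := by
    ext r
    constructor
    · rintro ⟨s, t, hst, β, hβ, rfl⟩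
      exact mem_biUnion (show (s, t) ∈ {p : Fin n × Fin n | G.adj p.1 p.2 = true} from hst)
        ⟨β, hβ, rfl⟩
    · intro hr
      rcases mem_iUnion₂.1 hr with ⟨⟨s, t⟩, hst, β, hβ, rfl⟩
      exact ⟨s, t, hst, β, hβ, rfl⟩
  rw [hEq]
  exact (Set.toFinite _).isCompact_biUnion fun p _ =>
    isCompact_Icc.image (pdist_cont G u v p.1 p.2 x)

private lemma ecc_attained (G : WGraph n) (u v : Fin n) (huv : G.adj u v = true) (x : ℝ) :
    ∃ s t, G.adj s t = true ∧ ∃ β ∈ Icc (0:ℝ) 1, G.eccOn u v x = G.pdist u v x s t β := by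
  have hne : {r : ℝ | ∃ s t, G.adj s t = true ∧ ∃ β ∈ Icc (0:ℝ) 1,
      r = G.pdist u v x s t β}.Nonempty :=
    ⟨G.pdist u v x u v 0, u, v, huv, 0, ⟨le_refl 0, zero_le_one⟩, rfl⟩
  exact (eccSet_compact G u v x).sSup_mem hne

private lemma pdist_le_eccOn (G : WGraph n) (u v : Fin n) (x : ℝ) (s t : Fin n)
    (hst : G.adj s t = true) (β : ℝ) (hβ : β ∈ Icc (0:ℝ) 1) :
    G.pdist u v x s t β ≤ G.eccOn u v x :=
  le_csSup (eccSet_compact G u v x).bddAbove ⟨s, t, hst, β, hβ, rfl⟩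

/-- If only finitely many points of `G` are farthest points of some point of `G`, then
the eccentricity function is not locally constant: on every edge it is nonconstant on
every nondegenerate parameter subinterval. -/
theorem finitely_many_farthest_points_no_constant_piece (n : ℕ) (G : WGraph n)
    (hconn : G.toSimple.Connected)
    (hfin : {g : NetPt n | G.validPt g ∧ ∃ p : NetPt n, G.validPt p ∧
        G.pdistPt p g = G.eccPt p}.Finite) :
    ∀ u v : Fin n, G.adj u v = true → ∀ a b : ℝ, 0 ≤ a → a < b → b ≤ 1 →
      ∃ mu ∈ Icc a b, G.eccOn u v mu ≠ G.eccOn u v a := by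
  classical
  intro u v huv a b ha hab hb
  by_contra hcon
  push_neg at hcon
  set c := G.eccOn u v a with hcdef
  have hflat : ∀ x ∈ Icc a b, G.eccOn u v x = c := hcon
  have hw : 0 < G.w u v := G.wpos u v huv
  have hwne : G.w u v ≠ 0 := ne_of_gt hw
  have hsub : Icc a b ⊆ Icc (0:ℝ) 1 := Icc_subset_Icc ha hb
  have hatt : ∀ x : ℝ, ∃ g : NetPt n,
      x ∈ Icc a b → G.validPt g ∧ G.pdist u v x g.1.1 g.1.2 g.2 = c := by
    intro x
    by_cases hx : x ∈ Icc a b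
    · obtain ⟨s, t, hst, β, hβ, he⟩ := ecc_attained G u v huv x
      exact ⟨((s, t), β), fun _ => ⟨⟨hst, hβ⟩, by rw [← he]; exact hflat x hx⟩⟩
    · exact ⟨((u, v), 0), fun hx' => absurd hx' hx⟩
  choose gf hgf using hatt
  set kink : NetPt n → ℝ := fun g =>
    if u = g.1.1 ∧ v = g.1.2 then g.2 else if u = g.1.2 ∧ v = g.1.1 then 1 - g.2 else 2
    with hkink
  set F : ℝ → NetPt n × Bool := fun x => (gf x, decide (x ≤ kink (gf x))) with hF
  have hmaps : MapsTo F (Icc a b)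
      (({g : NetPt n | G.validPt g ∧ ∃ p : NetPt n, G.validPt p ∧
          G.pdistPt p g = G.eccPt p}) ×ˢ (univ : Set Bool)) := by
    intro x hx
    obtain ⟨hval, hpd⟩ := hgf x hx
    refine ⟨⟨hval, ((u, v), x), ⟨huv, hsub hx⟩, ?_⟩, trivial⟩
    show G.pdist u v x (gf x).1.1 (gf x).1.2 (gf x).2 = G.eccOn u v x
    rw [hpd, hflat x hx]
  obtain ⟨x1, hx1, x2, hx2, hne, hFeq⟩ :=
    (Set.Icc_infinite hab).exists_ne_map_eq_of_mapsTo hmaps (hfin.prod (finite_univ))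
  have main : ∀ y1 y2, y1 ∈ Icc a b → y2 ∈ Icc a b → y1 < y2 → F y1 = F y2 → False := by
    intro y1 y2 hy1 hy2 h12 hFe
    have hg : gf y1 = gf y2 := congrArg Prod.fst hFe
    have hsd : decide (y1 ≤ kink (gf y1)) = decide (y2 ≤ kink (gf y2)) :=
      congrArg Prod.snd hFe
    rw [← hg, decide_eq_decide] at hsd
    obtain ⟨⟨hadjg, hβg⟩, hpd1⟩ := hgf y1 hy1
    obtain ⟨-, hpd2⟩ := hgf y2 hy2
    rw [← hg] at hpd2
    set g := gf y1 with hgdef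
    have hmmem : (y1 + y2) / 2 ∈ Icc a b :=
      ⟨by have := hy1.1; linarith, by have := hy2.2; linarith⟩
    have hm : G.pdist u v ((y1 + y2) / 2) g.1.1 g.1.2 g.2 ≤ c := by
      have := pdist_le_eccOn G u v ((y1 + y2) / 2) g.1.1 g.1.2 hadjg g.2 hβg
      rw [hflat _ hmmem] at this
      exact this
    simp only [WGraph.pdist] at hpd1 hpd2 hm
    by_cases hb1 : u = g.1.1 ∧ v = g.1.2
    · rw [if_pos hb1] at hpd1 hpd2 hm
      have hk : kink g = g.2 := by rw [hkink]; exact if_pos hb1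
      rw [hk] at hsd
      have q1 := hpd1.symm.le
      have q2 := hpd2.symm.le
      simp only [le_min_iff] at q1 q2
      obtain ⟨q1a, ⟨q11, q12⟩, ⟨q13, q14⟩⟩ := q1
      obtain ⟨q2a, ⟨q21, q22⟩, ⟨q23, q24⟩⟩ := q2
      simp only [min_le_iff] at hm
      rcases hm with hm | ((hm | hm) | (hm | hm))
      · by_cases hy : y1 ≤ g.2
        · have hy2' : y2 ≤ g.2 := hsd.mp hy
          rw [abs_of_nonpos (by linarith : y1 - g.2 ≤ 0)] at q1a
          rw [abs_of_nonpos (by linarith : y2 - g.2 ≤ 0)] at q2a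
          rw [abs_of_nonpos (by linarith : (y1 + y2) / 2 - g.2 ≤ 0)] at hm
          exact keyP' (G.w u v) c y1 y2 _ _ _ hwne h12.ne q1a q2a hm (by ring)
            (Or.inr (by ring))
        · have hy2' : ¬ y2 ≤ g.2 := fun h => hy (hsd.mpr h)
          push_neg at hy hy2'
          rw [abs_of_nonneg (by linarith : 0 ≤ y1 - g.2)] at q1a
          rw [abs_of_nonneg (by linarith : 0 ≤ y2 - g.2)] at q2a
          rw [abs_of_nonneg (by linarith : 0 ≤ (y1 + y2) / 2 - g.2)] at hm
          exact keyP' (G.w u v) c y1 y2 _ _ _ hwne h12.ne q1a q2a hm (by ring)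
            (Or.inl (by ring))
      · exact keyP' (G.w u v) c y1 y2 _ _ _ hwne h12.ne q11 q21 hm (by ring) (Or.inl (by ring))
      · exact keyP' (G.w u v) c y1 y2 _ _ _ hwne h12.ne q12 q22 hm (by ring) (Or.inl (by ring))
      · exact keyP' (G.w u v) c y1 y2 _ _ _ hwne h12.ne q13 q23 hm (by ring) (Or.inr (by ring))
      · exact keyP' (G.w u v) c y1 y2 _ _ _ hwne h12.ne q14 q24 hm (by ring) (Or.inr (by ring))
    · rw [if_neg hb1] at hpd1 hpd2 hm
      by_cases hb2 : u = g.1.2 ∧ v = g.1.1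
      · rw [if_pos hb2] at hpd1 hpd2 hm
        have hk : kink g = 1 - g.2 := by rw [hkink]; exact (if_neg hb1).trans (if_pos hb2)
        rw [hk] at hsd
        have q1 := hpd1.symm.le
        have q2 := hpd2.symm.le
        simp only [le_min_iff] at q1 q2
        obtain ⟨q1a, ⟨q11, q12⟩, ⟨q13, q14⟩⟩ := q1
        obtain ⟨q2a, ⟨q21, q22⟩, ⟨q23, q24⟩⟩ := q2
        simp only [min_le_iff] at hm
        rcases hm with hm | ((hm | hm) | (hm | hm))
        · by_cases hy : y1 ≤ 1 - g.2
          · have hy2' : y2 ≤ 1 - g.2 := hsd.mp hy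
            rw [abs_of_nonpos (by linarith : y1 - (1 - g.2) ≤ 0)] at q1a
            rw [abs_of_nonpos (by linarith : y2 - (1 - g.2) ≤ 0)] at q2a
            rw [abs_of_nonpos (by linarith : (y1 + y2) / 2 - (1 - g.2) ≤ 0)] at hm
            exact keyP' (G.w u v) c y1 y2 _ _ _ hwne h12.ne q1a q2a hm (by ring)
              (Or.inr (by ring))
          · have hy2' : ¬ y2 ≤ 1 - g.2 := fun h => hy (hsd.mpr h)
            push_neg at hy hy2'
            rw [abs_of_nonneg (by linarith : 0 ≤ y1 - (1 - g.2))] at q1a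
            rw [abs_of_nonneg (by linarith : 0 ≤ y2 - (1 - g.2))] at q2a
            rw [abs_of_nonneg (by linarith : 0 ≤ (y1 + y2) / 2 - (1 - g.2))] at hm
            exact keyP' (G.w u v) c y1 y2 _ _ _ hwne h12.ne q1a q2a hm (by ring)
              (Or.inl (by ring))
        · exact keyP' (G.w u v) c y1 y2 _ _ _ hwne h12.ne q11 q21 hm (by ring) (Or.inl (by ring))
        · exact keyP' (G.w u v) c y1 y2 _ _ _ hwne h12.ne q12 q22 hm (by ring) (Or.inl (by ring))
        · exact keyP' (G.w u v) c y1 y2 _ _ _ hwne h12.ne q13 q23 hm (by ring) (Or.inr (by ring))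
        · exact keyP' (G.w u v) c y1 y2 _ _ _ hwne h12.ne q14 q24 hm (by ring) (Or.inr (by ring))
      · rw [if_neg hb2] at hpd1 hpd2 hm
        have q1 := hpd1.symm.le
        have q2 := hpd2.symm.le
        simp only [le_min_iff] at q1 q2
        obtain ⟨⟨q11, q12⟩, ⟨q13, q14⟩⟩ := q1
        obtain ⟨⟨q21, q22⟩, ⟨q23, q24⟩⟩ := q2
        simp only [min_le_iff] at hm
        rcases hm with (hm | hm) | (hm | hm)
        · exact keyP' (G.w u v) c y1 y2 _ _ _ hwne h12.ne q11 q21 hm (by ring) (Or.inl (by ring))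
        · exact keyP' (G.w u v) c y1 y2 _ _ _ hwne h12.ne q12 q22 hm (by ring) (Or.inl (by ring))
        · exact keyP' (G.w u v) c y1 y2 _ _ _ hwne h12.ne q13 q23 hm (by ring) (Or.inr (by ring))
        · exact keyP' (G.w u v) c y1 y2 _ _ _ hwne h12.ne q14 q24 hm (by ring) (Or.inr (by ring))
  rcases (Ne.lt_or_gt hne) with h12 | h12
  · exact main x1 x2 hx1 hx2 h12 hFeq
  · exact main x2 x1 hx2 hx1 h12 hFeq.symm
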